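/- Let A be a uniform algebra on a compact Hausdorff space X and x ∈ X. Suppose that for each compact subset E of X \ {x} there exist a neighborhood U of x and f ∈ A with f = 1 on U, f = 0 on E, and such that for every k ∈ ℕ there exists g ∈ A with g^(2^k) = f. Then A has bounded relative units at x: there is a constant C ≥ 1 such that for each compact K ⊆ X \ {x} there exists h ∈ A vanishing on a neighborhood of x with h = 1 on K and ‖h‖_X ≤ C. -/

import Mathlib

/-- Feinstein–Heath. Let `A` be a uniform algebra on a compact Hausdorff
space `X` and `x ∈ X`.  Suppose that for each compact `E ⊆ X \ {x}` there are a neighborhood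
`U` of `x` and `f ∈ A` with `f = 1` on `U`, `f = 0` on `E`, and `f` having `2^k`-th roots in
`A` for all `k`.  Then `A` has bounded relative units at `x`. -/
theorem stmt6 {X : Type*} [TopologicalSpace X] [CompactSpace X] [T2Space X]
    (A : Subalgebra ℂ C(X, ℂ)) (hclosed : IsClosed (A : Set C(X, ℂ)))
    (hsep : ∀ x y : X, x ≠ y → ∃ f ∈ A, f x ≠ f y)
    (x : X)
    (hyp : ∀ E : Set X, IsCompact E → E ⊆ {x}ᶜ →
      ∃ U ∈ nhds x, ∃ f ∈ A, (∀ y ∈ U, f y = 1) ∧ (∀ y ∈ E, f y = 0) ∧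
        ∀ k : ℕ, ∃ g ∈ A, g ^ (2 ^ k) = f) :
    ∃ C : ℝ, 1 ≤ C ∧ ∀ K : Set X, IsCompact K → K ⊆ {x}ᶜ →
      ∃ h ∈ A, (∃ U ∈ nhds x, ∀ y ∈ U, h y = 0) ∧ (∀ y ∈ K, h y = 1) ∧ ‖h‖ ≤ C := by
  refine ⟨3, by norm_num, fun K hK hKx => ?_⟩
  obtain ⟨U, hU, f, hfA, hfU, hfK, hroots⟩ := hyp K hK hKx
  -- choose `k` with `‖f‖ ≤ 2 ^ (2 ^ k)`
  obtain ⟨k, hk⟩ : ∃ k : ℕ, ‖f‖ ≤ 2 ^ (2 ^ k) := by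
    obtain ⟨k, hk⟩ := pow_unbounded_of_one_lt ‖f‖ (one_lt_two (α := ℝ))
    refine ⟨k, hk.le.trans ?_⟩
    exact pow_le_pow_right₀ one_le_two (Nat.lt_two_pow_self (n := k)).le
  obtain ⟨g, hgA, hgf⟩ := hroots k
  set N := 2 ^ k with hN
  have hNpos : 0 < N := by rw [hN]; positivity
  have hgpow : ∀ y : X, (g y) ^ N = f y := by
    intro y
    have : (g ^ N) y = f y := by rw [hgf]
    simpa using this
  have hxU : x ∈ U := mem_of_mem_nhds hU
  set ζ : ℂ := g x with hζdef
  have hζpow : ζ ^ N = 1 := by rw [hζdef, hgpow x, hfU x hxU]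
  have hζ0 : ζ ≠ 0 := by
    intro h0
    rw [h0, zero_pow hNpos.ne'] at hζpow
    exact zero_ne_one hζpow
  have hζnorm : ‖ζ‖ = 1 := by
    have h1 : ‖ζ‖ ^ N = 1 := by rw [← norm_pow, hζpow, norm_one]
    rcases lt_trichotomy ‖ζ‖ 1 with h | h | h
    · exact absurd h1 (ne_of_lt (pow_lt_one₀ (norm_nonneg ζ) h hNpos.ne'))
    · exact h
    · exact absurd h1 (ne_of_gt (one_lt_pow₀ h hNpos.ne'))
  -- bound for g
  have hgbdd : ∀ y : X, ‖g y‖ ≤ 2 := by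
    intro y
    have h1 : ‖g y‖ ^ N = ‖f y‖ := by rw [← norm_pow, hgpow]
    have h2 : ‖f y‖ ≤ ‖f‖ := ContinuousMap.norm_coe_le_norm f y
    have h3 : ‖g y‖ ^ N ≤ (2 : ℝ) ^ N := by rw [h1]; exact h2.trans hk
    exact le_of_pow_le_pow_left₀ hNpos.ne' (by norm_num) h3
  -- the function h
  refine ⟨(1 : C(X, ℂ)) - ζ⁻¹ • g, A.sub_mem A.one_mem (A.smul_mem hgA ζ⁻¹), ?_, ?_, ?_⟩
  · -- vanishes on a neighborhood of x
    set F : Set ℂ := {z : ℂ | z ^ N = 1 ∧ z ≠ ζ} with hF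
    have hFfin : F.Finite := by
      have hpne : (Polynomial.X ^ N - Polynomial.C (1 : ℂ)) ≠ 0 :=
        Polynomial.X_pow_sub_C_ne_zero hNpos 1
      refine (Polynomial.finite_setOf_isRoot hpne).subset ?_
      rintro z ⟨hz1, -⟩
      simp [Polynomial.IsRoot, hz1]
    have hFclosed : IsClosed F := hFfin.isClosed
    refine ⟨interior U ∩ (g ⁻¹' F)ᶜ, ?_, ?_⟩
    · refine IsOpen.mem_nhds (isOpen_interior.inter
        (hFclosed.preimage g.continuous).isOpen_compl) ⟨?_, ?_⟩
      · exact mem_interior_iff_mem_nhds.2 hU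
      · intro hmem
        exact hmem.2 rfl
    · rintro y ⟨hyU, hyF⟩
      have hy1 : (g y) ^ N = 1 := by
        rw [hgpow y, hfU y (interior_subset hyU)]
      have : g y = ζ := by
        by_contra hne
        exact hyF ⟨hy1, hne⟩
      simp [this, inv_mul_cancel₀ hζ0]
  · -- equals 1 on K
    intro y hy
    have : (g y) ^ N = 0 := by rw [hgpow y, hfK y hy]
    have hg0 : g y = 0 := pow_eq_zero_iff hNpos.ne' |>.1 this
    simp [hg0]
  · -- norm bound
    refine ContinuousMap.norm_le _ (by norm_num) |>.2 fun y => ?_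
    have h1 : ‖((1 : C(X, ℂ)) - ζ⁻¹ • g) y‖ = ‖1 - ζ⁻¹ * g y‖ := by simp [smul_eq_mul]
    rw [h1]
    have h2 : ‖ζ⁻¹ * g y‖ ≤ 2 := by
      rw [norm_mul, norm_inv, hζnorm]
      simpa using hgbdd y
    calc ‖1 - ζ⁻¹ * g y‖ ≤ ‖(1 : ℂ)‖ + ‖ζ⁻¹ * g y‖ := norm_sub_le _ _
      _ ≤ 1 + 2 := by rw [norm_one]; exact add_le_add le_rfl h2
      _ = 3 := by norm_num
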